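/- For any connected orthogonal convex shape S whose interior has an empty cell, a contradiction arises: if (x,y) is a cell not in S but lying in the interior of the perimeter of S, then the horizontal line through (x,y) meets S both to the left and to the right of (x,y), violating orthogonal convexity. Hence a connected orthogonal convex shape has no interior holes. -/
import Mathlib


def Adjacent (p q : ℤ × ℤ) : Prop :=
  (p.1 = q.1 ∧ (p.2 = q.2 + 1 ∨ q.2 = p.2 + 1)) ∨
  (p.2 = q.2 ∧ (p.1 = q.1 + 1 ∨ q.1 = p.1 + 1))

def ShapeConnected (S : Finset (ℤ × ℤ)) : Prop :=
  ∀ p ∈ S, ∀ q ∈ S,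
    Relation.ReflTransGen (fun a b => a ∈ S ∧ b ∈ S ∧ Adjacent a b) p q

def OrthoConvex (S : Finset (ℤ × ℤ)) : Prop :=
  (∀ p ∈ S, ∀ q ∈ S, p.1 = q.1 → ∀ y : ℤ,
      min p.2 q.2 < y → y < max p.2 q.2 → (p.1, y) ∈ S) ∧
  (∀ p ∈ S, ∀ q ∈ S, p.2 = q.2 → ∀ x : ℤ,
      min p.1 q.1 < x → x < max p.1 q.1 → (x, p.2) ∈ S)

/-- `c` is a hole of `S`: it is empty but every infinite axis-parallel lattice path
starting at `c` meets `S` (i.e. `c` is enclosed by `S`). -/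
def IsHole (S : Finset (ℤ × ℤ)) (c : ℤ × ℤ) : Prop :=
  c ∉ S ∧ ∀ f : ℕ → ℤ × ℤ, f 0 = c → (∀ n, Adjacent (f n) (f (n + 1))) →
    Function.Injective f → ∃ n, f n ∈ S

/-- A connected orthogonal convex shape has no interior holes. -/
theorem stmt13 (S : Finset (ℤ × ℤ)) (hc : ShapeConnected S) (ho : OrthoConvex S) :
    ∀ c : ℤ × ℤ, ¬ IsHole S c := by
  rintro ⟨x, y⟩ ⟨hcS, hall⟩
  -- rightward ray
  obtain ⟨n, hn⟩ := hall (fun n => (x + n, y)) (by simp)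
    (fun n => Or.inr ⟨rfl, Or.inr (by push_cast; ring)⟩)
    (fun a b hab => by
      have : (x + (a : ℤ)) = x + b := congrArg Prod.fst hab
      exact_mod_cast by omega)
  -- leftward ray
  obtain ⟨m, hm⟩ := hall (fun n => (x - n, y)) (by simp)
    (fun n => Or.inr ⟨rfl, Or.inl (by push_cast; ring)⟩)
    (fun a b hab => by
      have : (x - (a : ℤ)) = x - b := congrArg Prod.fst hab
      exact_mod_cast by omega)
  have hn0 : (n : ℤ) ≠ 0 := by
    rintro h
    exact hcS (by simpa [show (n:ℤ) = 0 from h] using hn)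
  have hm0 : (m : ℤ) ≠ 0 := by
    rintro h
    exact hcS (by simpa [show (m:ℤ) = 0 from h] using hm)
  have hnn : (0:ℤ) < n := lt_of_le_of_ne (Int.ofNat_nonneg n) (Ne.symm hn0)
  have hmm : (0:ℤ) < m := lt_of_le_of_ne (Int.ofNat_nonneg m) (Ne.symm hm0)
  have := ho.2 (x + n, y) hn (x - m, y) hm rfl x (by simp; omega) (by simp; omega)
  exact hcS this
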